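/- For every point P ∈ E(K) with P ≠ O one has −log d(P, O) = (1/2) log⁺|x(P)|, where log⁺ t = log max(t, 1); equivalently, d(P, O) = 1 if |x(P)| ≤ 1, and d(P, O) = |x(P)|^{−1/2} if |x(P)| > 1. -/

import Mathlib

open WeierstrassCurve

variable {K : Type*} [NontriviallyNormedField K] [IsUltrametricDist K]
  [CompleteSpace K] [IsAlgClosed K]

/-- The "kernel of reduction" `B°`: the identity together with the affine points
with `|x| > 1`. -/
def kernelOfReduction (W : WeierstrassCurve.Affine K) : Set W.Point :=
  {P | P = 0 ∨ ∃ (x y : K) (h : W.Nonsingular x y), P = .some _ _ h ∧ 1 < ‖x‖}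

/-- The local parameter `z = -x/y` at the origin, defined to be `0` at the identity. -/
noncomputable def zmap (W : WeierstrassCurve.Affine K) : W.Point → K
  | .zero => 0
  | @WeierstrassCurve.Affine.Point.some _ _ _ x y _ => -x / y

open Classical in
/-- The non-archimedean metric `d` on `E(K)`: `d(P,Q) = |z(P - Q)|` if `P - Q ∈ B°`,
and `d(P,Q) = 1` otherwise. -/
noncomputable def ellDist (W : WeierstrassCurve.Affine K) (P Q : W.Point) : ℝ :=
  letI := Classical.propDecidable (P - Q ∈ kernelOfReduction W)
  if P - Q ∈ kernelOfReduction W then ‖zmap W (P - Q)‖ else 1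

private lemma norm_add_big {a b : K} (h : ‖b‖ < ‖a‖) : ‖a + b‖ = ‖a‖ := by
  rw [IsUltrametricDist.norm_add_eq_max_of_norm_ne_norm h.ne', max_eq_left h.le]

private lemma key_norm {W : WeierstrassCurve.Affine K}
    (ha₁ : ‖W.a₁‖ ≤ 1) (ha₂ : ‖W.a₂‖ ≤ 1) (ha₃ : ‖W.a₃‖ ≤ 1)
    (ha₄ : ‖W.a₄‖ ≤ 1) (ha₆ : ‖W.a₆‖ ≤ 1) {x y : K} (heq : W.Equation x y)
    (hx : 1 < ‖x‖) : ‖y‖ ^ 2 = ‖x‖ ^ 3 := by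
  have heq' : y ^ 2 + W.a₁ * x * y + W.a₃ * y = x ^ 3 + W.a₂ * x ^ 2 + W.a₄ * x + W.a₆ :=
    (W.equation_iff x y).mp heq
  have hx0 : (0 : ℝ) < ‖x‖ := lt_trans one_pos hx
  -- RHS has norm ‖x‖^3
  have h2 : ‖W.a₂ * x ^ 2‖ < ‖x‖ ^ 3 := by
    rw [norm_mul, norm_pow]
    calc ‖W.a₂‖ * ‖x‖ ^ 2 ≤ 1 * ‖x‖ ^ 2 := by
          exact mul_le_mul_of_nonneg_right ha₂ (by positivity)
      _ = ‖x‖ ^ 2 := one_mul _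
      _ < ‖x‖ ^ 3 := by exact pow_lt_pow_right₀ hx (by norm_num)
  have h4 : ‖W.a₄ * x‖ < ‖x‖ ^ 3 := by
    rw [norm_mul]
    calc ‖W.a₄‖ * ‖x‖ ≤ 1 * ‖x‖ := mul_le_mul_of_nonneg_right ha₄ hx0.le
      _ = ‖x‖ ^ 1 := by ring
      _ < ‖x‖ ^ 3 := pow_lt_pow_right₀ hx (by norm_num)
  have h6 : ‖W.a₆‖ < ‖x‖ ^ 3 := lt_of_le_of_lt ha₆ (by
    calc (1:ℝ) = 1 ^ 3 := by norm_num
      _ < ‖x‖ ^ 3 := by gcongr)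
  have hrhs : ‖x ^ 3 + W.a₂ * x ^ 2 + W.a₄ * x + W.a₆‖ = ‖x‖ ^ 3 := by
    rw [add_assoc, add_assoc, norm_add_big, norm_pow]
    rw [norm_pow]
    calc ‖W.a₂ * x ^ 2 + (W.a₄ * x + W.a₆)‖
        ≤ max ‖W.a₂ * x ^ 2‖ ‖W.a₄ * x + W.a₆‖ := IsUltrametricDist.norm_add_le_max _ _
      _ < ‖x‖ ^ 3 := by
          refine max_lt h2 ?_
          calc ‖W.a₄ * x + W.a₆‖ ≤ max ‖W.a₄ * x‖ ‖W.a₆‖ := IsUltrametricDist.norm_add_le_max _ _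
            _ < ‖x‖ ^ 3 := max_lt h4 h6
  -- ‖y‖ > ‖x‖
  have hyx : ‖x‖ < ‖y‖ := by
    by_contra hle
    push_neg at hle
    have ht1 : ‖y ^ 2‖ ≤ ‖x‖ ^ 2 := by rw [norm_pow]; gcongr
    have ht2 : ‖W.a₁ * x * y‖ ≤ ‖x‖ ^ 2 := by
      rw [norm_mul, norm_mul]
      calc ‖W.a₁‖ * ‖x‖ * ‖y‖ ≤ 1 * ‖x‖ * ‖x‖ := by gcongr
        _ = ‖x‖ ^ 2 := by ring
    have ht3 : ‖W.a₃ * y‖ ≤ ‖x‖ ^ 2 := by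
      rw [norm_mul]
      calc ‖W.a₃‖ * ‖y‖ ≤ 1 * ‖x‖ := by gcongr
        _ ≤ ‖x‖ ^ 2 := by nlinarith
    have hlhs : ‖y ^ 2 + W.a₁ * x * y + W.a₃ * y‖ ≤ ‖x‖ ^ 2 := by
      calc ‖y ^ 2 + W.a₁ * x * y + W.a₃ * y‖
          ≤ max ‖y ^ 2 + W.a₁ * x * y‖ ‖W.a₃ * y‖ := IsUltrametricDist.norm_add_le_max _ _
        _ ≤ max (max ‖y ^ 2‖ ‖W.a₁ * x * y‖) ‖W.a₃ * y‖ := by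
            gcongr; exact IsUltrametricDist.norm_add_le_max _ _
        _ ≤ ‖x‖ ^ 2 := max_le (max_le ht1 ht2) ht3
    rw [heq', hrhs] at hlhs
    have : ‖x‖ ^ 3 ≤ ‖x‖ ^ 2 := hlhs
    have h23 : ‖x‖ ^ 2 < ‖x‖ ^ 3 := pow_lt_pow_right₀ hx (by norm_num)
    linarith
  -- LHS has norm ‖y‖^2
  have hy0 : (0:ℝ) < ‖y‖ := lt_trans hx0 hyx
  have hlhs : ‖y ^ 2 + W.a₁ * x * y + W.a₃ * y‖ = ‖y‖ ^ 2 := by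
    rw [add_assoc, norm_add_big, norm_pow]
    rw [norm_pow]
    calc ‖W.a₁ * x * y + W.a₃ * y‖
        ≤ max ‖W.a₁ * x * y‖ ‖W.a₃ * y‖ := IsUltrametricDist.norm_add_le_max _ _
      _ < ‖y‖ ^ 2 := by
          refine max_lt ?_ ?_
          · rw [norm_mul, norm_mul]
            calc ‖W.a₁‖ * ‖x‖ * ‖y‖ ≤ 1 * ‖x‖ * ‖y‖ := by gcongr
              _ = ‖x‖ * ‖y‖ := by ring
              _ < ‖y‖ * ‖y‖ := by gcongr
              _ = ‖y‖ ^ 2 := by ring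
          · rw [norm_mul]
            calc ‖W.a₃‖ * ‖y‖ ≤ 1 * ‖y‖ := by gcongr
              _ = ‖y‖ := one_mul _
              _ < ‖y‖ ^ 2 := by nlinarith
  rw [heq', hrhs] at hlhs
  rw [hlhs]

theorem stmt_11 (W : WeierstrassCurve.Affine K) (hΔ : W.Δ ≠ 0)
    (ha₁ : ‖W.a₁‖ ≤ 1) (ha₂ : ‖W.a₂‖ ≤ 1) (ha₃ : ‖W.a₃‖ ≤ 1)
    (ha₄ : ‖W.a₄‖ ≤ 1) (ha₆ : ‖W.a₆‖ ≤ 1) (x y : K) (h : W.Nonsingular x y) :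
    -Real.log (ellDist W (.some _ _ h) 0) = (1 / 2) * Real.log (max ‖x‖ 1) := by
  classical
  have hsub : (Affine.Point.some _ _ h : W.Point) - 0 = .some _ _ h := sub_zero _
  rw [ellDist]
  by_cases hx : 1 < ‖x‖
  · have hmem : (Affine.Point.some _ _ h : W.Point) - 0 ∈ kernelOfReduction W := by
      rw [hsub]
      exact Or.inr ⟨x, y, h, rfl, hx⟩
    rw [if_pos hmem, hsub]
    have hx0 : (0:ℝ) < ‖x‖ := lt_trans one_pos hx
    have hkey : ‖y‖ ^ 2 = ‖x‖ ^ 3 := key_norm ha₁ ha₂ ha₃ ha₄ ha₆ h.1 hx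
    have hy0 : (0:ℝ) < ‖y‖ := by
      by_contra hy
      push_neg at hy
      have : ‖y‖ = 0 := le_antisymm hy (norm_nonneg _)
      rw [this] at hkey
      norm_num at hkey
      exact absurd hkey.symm (ne_of_gt (by positivity))
    have hzn : ‖(zmap W (Affine.Point.some _ _ h))‖ = ‖x‖ / ‖y‖ := by
      show ‖-x / y‖ = ‖x‖ / ‖y‖
      rw [norm_div, norm_neg]
    rw [hzn, max_eq_left hx.le, Real.log_div (by positivity) (by positivity)]
    have hlog : 2 * Real.log ‖y‖ = 3 * Real.log ‖x‖ := by
      have := congrArg Real.log hkey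
      rwa [Real.log_pow, Real.log_pow, Nat.cast_ofNat, Nat.cast_ofNat] at this
    linarith
  · have hmem : (Affine.Point.some _ _ h : W.Point) - 0 ∉ kernelOfReduction W := by
      rw [hsub]
      rintro (h0 | ⟨x', y', h', heq, hx'⟩)
      · exact Affine.Point.some_ne_zero h h0
      · rw [Affine.Point.some.injEq] at heq
        exact hx (heq.1 ▸ hx')
    rw [if_neg hmem]
    push_neg at hx
    simp [max_eq_right hx]
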